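/- Let k be a field and τ ≥ 1 an integer. The subring k[t^6, t^{3+6τ}, t^{4+6τ}, t^{7+6τ}, t^{8+6τ}] of the polynomial ring k[t] is a free module over its subring k[t^6], with basis 1, t^{3+6τ}, t^{4+6τ}, t^{7+6τ}, t^{8+6τ}, t^{11+12τ}. -/

import Mathlib

open Polynomial

theorem coeff_adjoin_vanish (k : Type*) [Field k] (p : Polynomial k)
    (hp : p ∈ Algebra.adjoin k ({X ^ 6} : Set (Polynomial k))) (n : ℕ) (hn : ¬ 6 ∣ n) :
    p.coeff n = 0 := by
  induction hp using Algebra.adjoin_induction generalizing n with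
  | mem x hx =>
    simp only [Set.mem_singleton_iff] at hx
    subst hx
    rw [coeff_X_pow, if_neg]
    rintro rfl; exact hn ⟨1, rfl⟩
  | algebraMap c =>
    rw [Polynomial.algebraMap_eq, coeff_C, if_neg]
    rintro rfl; exact hn ⟨0, rfl⟩
  | add x y hx hy ihx ihy => rw [coeff_add, ihx n hn, ihy n hn, add_zero]
  | mul x y hx hy ihx ihy =>
    rw [coeff_mul]
    apply Finset.sum_eq_zero
    rintro ⟨a, b⟩ hab
    rw [Finset.HasAntidiagonal.mem_antidiagonal] at hab
    by_cases h6 : 6 ∣ a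
    · rw [ihy b (fun hb => hn (hab ▸ dvd_add h6 hb)), mul_zero]
    · rw [ihx a h6, zero_mul]

def eexp (τ : ℕ) : Fin 6 → ℕ
  | 0 => 0
  | 1 => 3 + 6 * τ
  | 2 => 4 + 6 * τ
  | 3 => 7 + 6 * τ
  | 4 => 8 + 6 * τ
  | 5 => 11 + 12 * τ

theorem fx (k : Type*) [Field k] (τ : ℕ) :
    (fun i : Fin 6 => (![1, X ^ (3 + 6 * τ), X ^ (4 + 6 * τ), X ^ (7 + 6 * τ), X ^ (8 + 6 * τ),
        X ^ (11 + 12 * τ)] i : Polynomial k)) = fun i => X ^ (eexp τ i) := by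
  funext i
  fin_cases i
  · simp [eexp]
  all_goals rfl

theorem resid (τ d : ℕ) (h6 : 6 ∣ d) (i j : Fin 6) (hij : j ≠ i)
    (hle : eexp τ j ≤ d + eexp τ i) : ¬ 6 ∣ (d + eexp τ i - eexp τ j) := by
  fin_cases i <;> fin_cases j <;> simp [eexp] at * <;> omega

theorem mem_span_pow (k : Type*) [Field k] (τ : ℕ) (m : ℕ) (l : Fin 6) (n : ℕ)
    (hn : n = 6 * m + eexp τ l) :
    (X ^ n : Polynomial k) ∈ Submodule.span
      (Algebra.adjoin k ({X ^ 6} : Set (Polynomial k)))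
      (Set.range fun i : Fin 6 => (X ^ (eexp τ i) : Polynomial k)) := by
  subst hn
  have hmem : ((X : Polynomial k) ^ 6) ^ m ∈ Algebra.adjoin k ({X ^ 6} : Set (Polynomial k)) :=
    pow_mem (Algebra.subset_adjoin (Set.mem_singleton _)) m
  have h := Submodule.smul_mem
    (Submodule.span (Algebra.adjoin k ({X ^ 6} : Set (Polynomial k)))
      (Set.range fun i : Fin 6 => (X ^ (eexp τ i) : Polynomial k)))
    (⟨(X ^ 6) ^ m, hmem⟩ : Algebra.adjoin k ({X ^ 6} : Set (Polynomial k)))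
    (Submodule.subset_span ⟨l, rfl⟩)
  have he : (⟨(X ^ 6) ^ m, hmem⟩ : Algebra.adjoin k ({X ^ 6} : Set (Polynomial k))) •
      (X ^ (eexp τ l) : Polynomial k) = X ^ (6 * m + eexp τ l) := by
    rw [Algebra.smul_def]
    simp [Subalgebra.algebraMap_eq, ← pow_mul, ← pow_add]
  rwa [he] at h

def lIdx : Fin 6 → Fin 6 → Fin 6
  | 0, j => j
  | 1, 0 => 1 | 1, 1 => 0 | 1, 2 => 3 | 1, 3 => 2 | 1, 4 => 5 | 1, 5 => 4
  | 2, 0 => 2 | 2, 1 => 3 | 2, 2 => 4 | 2, 3 => 5 | 2, 4 => 0 | 2, 5 => 1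
  | 3, 0 => 3 | 3, 1 => 2 | 3, 2 => 5 | 3, 3 => 4 | 3, 4 => 1 | 3, 5 => 0
  | 4, 0 => 4 | 4, 1 => 5 | 4, 2 => 0 | 4, 3 => 1 | 4, 4 => 2 | 4, 5 => 3
  | 5, 0 => 5 | 5, 1 => 4 | 5, 2 => 1 | 5, 3 => 0 | 5, 4 => 3 | 5, 5 => 2

def mIdx (τ : ℕ) : Fin 6 → Fin 6 → ℕ
  | 0, _ => 0
  | 1, 0 => 0 | 1, 1 => 1 + 2 * τ | 1, 2 => τ | 1, 3 => 1 + τ | 1, 4 => 0 | 1, 5 => 1 + 2 * τ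
  | 2, 0 => 0 | 2, 1 => τ | 2, 2 => τ | 2, 3 => 0 | 2, 4 => 2 + 2 * τ | 2, 5 => 2 + 2 * τ
  | 3, 0 => 0 | 3, 1 => 1 + τ | 3, 2 => 0 | 3, 3 => 1 + τ | 3, 4 => 2 + τ | 3, 5 => 3 + 3 * τ
  | 4, 0 => 0 | 4, 1 => 0 | 4, 2 => 2 + 2 * τ | 4, 3 => 2 + τ | 4, 4 => 2 + τ | 4, 5 => 2 + 2 * τ
  | 5, 0 => 0 | 5, 1 => 1 + 2 * τ | 5, 2 => 2 + 2 * τ | 5, 3 => 3 + 3 * τ | 5, 4 => 2 + 2 * τ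
  | 5, 5 => 3 + 3 * τ

theorem eexp_add (τ : ℕ) (i j : Fin 6) :
    eexp τ i + eexp τ j = 6 * mIdx τ i j + eexp τ (lIdx i j) := by
  fin_cases i <;> fin_cases j <;> simp [eexp, mIdx, lIdx] <;> ring

theorem C_mem_span (k : Type*) [Field k] (τ : ℕ) (c : k) :
    algebraMap k (Polynomial k) c ∈ Submodule.span
      (Algebra.adjoin k ({X ^ 6} : Set (Polynomial k)))
      (Set.range fun i : Fin 6 => (X ^ (eexp τ i) : Polynomial k)) := by
  have hmem : algebraMap k (Polynomial k) c ∈ Algebra.adjoin k ({X ^ 6} : Set (Polynomial k)) :=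
    Subalgebra.algebraMap_mem _ c
  have h := Submodule.smul_mem
    (Submodule.span (Algebra.adjoin k ({X ^ 6} : Set (Polynomial k)))
      (Set.range fun i : Fin 6 => (X ^ (eexp τ i) : Polynomial k)))
    (⟨algebraMap k (Polynomial k) c, hmem⟩ : Algebra.adjoin k ({X ^ 6} : Set (Polynomial k)))
    (Submodule.subset_span ⟨0, rfl⟩)
  have he : (⟨algebraMap k (Polynomial k) c, hmem⟩ :
      Algebra.adjoin k ({X ^ 6} : Set (Polynomial k))) • (X ^ (eexp τ 0) : Polynomial k)
      = algebraMap k (Polynomial k) c := by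
    rw [Algebra.smul_def, Subalgebra.algebraMap_eq]
    show algebraMap k (Polynomial k) c * X ^ (0 : ℕ) = _
    rw [pow_zero, mul_one]
  rwa [he] at h

theorem semigroup_algebra_free_family_one (k : Type*) [Field k] (τ : ℕ) (hτ : 1 ≤ τ) :
    LinearIndependent
      (Algebra.adjoin k ({Polynomial.X ^ 6} : Set (Polynomial k)))
      (fun i : Fin 6 =>
        (![1, Polynomial.X ^ (3 + 6 * τ), Polynomial.X ^ (4 + 6 * τ),
            Polynomial.X ^ (7 + 6 * τ), Polynomial.X ^ (8 + 6 * τ),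
            Polynomial.X ^ (11 + 12 * τ)] i : Polynomial k)) ∧
    (Submodule.span
        (Algebra.adjoin k ({Polynomial.X ^ 6} : Set (Polynomial k)))
        (Set.range fun i : Fin 6 =>
          (![1, Polynomial.X ^ (3 + 6 * τ), Polynomial.X ^ (4 + 6 * τ),
              Polynomial.X ^ (7 + 6 * τ), Polynomial.X ^ (8 + 6 * τ),
              Polynomial.X ^ (11 + 12 * τ)] i : Polynomial k)) : Set (Polynomial k))
      = (Algebra.adjoin k ({Polynomial.X ^ 6, Polynomial.X ^ (3 + 6 * τ),
          Polynomial.X ^ (4 + 6 * τ), Polynomial.X ^ (7 + 6 * τ),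
          Polynomial.X ^ (8 + 6 * τ)} : Set (Polynomial k)) : Set (Polynomial k)) := by
  rw [fx k τ]
  set R := Algebra.adjoin k ({X ^ 6} : Set (Polynomial k)) with hR
  set A := Algebra.adjoin k ({X ^ 6, X ^ (3 + 6 * τ), X ^ (4 + 6 * τ), X ^ (7 + 6 * τ),
    X ^ (8 + 6 * τ)} : Set (Polynomial k)) with hA
  set M := Submodule.span R (Set.range fun i : Fin 6 => (X ^ (eexp τ i) : Polynomial k)) with hM
  constructor
  · -- linear independence
    rw [Fintype.linearIndependent_iff]
    intro g hg i
    ext : 1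
    apply Polynomial.ext
    intro d
    by_cases h6 : 6 ∣ d
    · have h0 := congrArg (fun p : Polynomial k => p.coeff (d + eexp τ i)) hg
      simp only [Polynomial.finset_sum_coeff, coeff_zero] at h0
      have hterm : ∀ j : Fin 6,
          ((g j • (X ^ (eexp τ j)) : Polynomial k)).coeff (d + eexp τ i)
            = if eexp τ j ≤ d + eexp τ i
              then (g j : Polynomial k).coeff (d + eexp τ i - eexp τ j) else 0 := by
        intro j
        rw [Algebra.smul_def, Subalgebra.algebraMap_eq, coeff_mul_X_pow']
        rfl
      rw [Finset.sum_congr rfl (fun j _ => hterm j)] at h0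
      have hzero : ∀ b ∈ Finset.univ, b ≠ i →
          (if eexp τ b ≤ d + eexp τ i
            then ((g b : Polynomial k)).coeff (d + eexp τ i - eexp τ b) else 0) = 0 := by
        intro j _ hji
        rw [ite_eq_right_iff]
        intro hle
        exact coeff_adjoin_vanish k _ (g j).2 _ (resid τ d h6 i j hji hle)
      rw [Finset.sum_eq_single i hzero (fun h => absurd (Finset.mem_univ i) h)] at h0
      rw [if_pos (Nat.le_add_left _ _), Nat.add_sub_cancel] at h0
      simpa using h0
    · exact coeff_adjoin_vanish k _ (g i).2 d h6
  · -- span equality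
    have hRA : R ≤ A := by
      apply Algebra.adjoin_mono
      intro x hx
      rw [Set.mem_singleton_iff] at hx
      subst hx
      exact Set.mem_insert _ _
    have hmulMM : M * M ≤ M := by
      rw [hM, Submodule.span_mul_span]
      refine Submodule.span_le.mpr ?_
      rintro _ ⟨_, ⟨i, rfl⟩, _, ⟨j, rfl⟩, rfl⟩
      show (X : Polynomial k) ^ (eexp τ i) * X ^ (eexp τ j) ∈ _
      rw [← pow_add, eexp_add]
      exact mem_span_pow k τ _ _ _ rfl
    apply Set.Subset.antisymm
    · -- span ⊆ adjoin
      intro x hx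
      induction hx using Submodule.span_induction with
      | mem y hy =>
        obtain ⟨i, rfl⟩ := hy
        fin_cases i
        · exact one_mem A
        · exact Algebra.subset_adjoin (by simp [eexp])
        · exact Algebra.subset_adjoin (by simp [eexp])
        · exact Algebra.subset_adjoin (by simp [eexp])
        · exact Algebra.subset_adjoin (by simp [eexp])
        · show (X : Polynomial k) ^ (11 + 12 * τ) ∈ A
          have : (X : Polynomial k) ^ (11 + 12 * τ) = X ^ (3 + 6 * τ) * X ^ (8 + 6 * τ) := by
            rw [← pow_add]; ring_nf
          rw [this]
          exact mul_mem (Algebra.subset_adjoin (by simp)) (Algebra.subset_adjoin (by simp))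
      | zero => exact zero_mem A
      | add y z _ _ ihy ihz => exact add_mem ihy ihz
      | smul r y _ ihy =>
        rw [Algebra.smul_def, Subalgebra.algebraMap_eq]
        exact mul_mem (hRA r.2) ihy
    · -- adjoin ⊆ span
      intro x hx
      induction hx using Algebra.adjoin_induction with
      | mem y hy =>
        simp only [Set.mem_insert_iff, Set.mem_singleton_iff] at hy
        rcases hy with rfl | rfl | rfl | rfl | rfl
        · exact mem_span_pow k τ 1 0 6 (by simp [eexp])
        · exact mem_span_pow k τ 0 1 _ (by simp [eexp])
        · exact mem_span_pow k τ 0 2 _ (by simp [eexp])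
        · exact mem_span_pow k τ 0 3 _ (by simp [eexp])
        · exact mem_span_pow k τ 0 4 _ (by simp [eexp])
      | algebraMap c => exact C_mem_span k τ c
      | add y z _ _ ihy ihz => exact add_mem ihy ihz
      | mul y z _ _ ihy ihz => exact hmulMM (Submodule.mul_mem_mul ihy ihz)
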